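/- arXiv:1812.11511 — 2 statements merged into one kernel-verified Lean document; each statement's English description precedes it below -/
import Mathlib

section
/- Let A be a residuated lattice and F a filter of A. A subset P of A is an F-minimal prime filter if and only if its complement A \ P is a ∨-closed subset of A that is maximal (with respect to inclusion) among ∨-closed subsets of A disjoint from F. -/
class ResiduatedLattice (α : Type*) extends Lattice α, CommMonoid α, BoundedOrder α where
  rimp : α → α → α
  one_eq_top : (1 : α) = ⊤
  adjunction : ∀ x y z : α, x * y ≤ z ↔ x ≤ rimp y z

variable {α : Type*} [ResiduatedLattice α]

/-- A filter of a residuated lattice: nonempty, closed under `⊙` and upward closed. -/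
def IsFilter (F : Set α) : Prop :=
  F.Nonempty ∧ (∀ x ∈ F, ∀ y ∈ F, x * y ∈ F) ∧ ∀ x ∈ F, ∀ y : α, x ≤ y → y ∈ F

/-- A prime filter: a proper filter such that `x ⊔ y ∈ P` implies `x ∈ P` or `y ∈ P`. -/
def IsPrimeFilter (P : Set α) : Prop :=
  IsFilter P ∧ P ≠ Set.univ ∧ ∀ x y : α, x ⊔ y ∈ P → x ∈ P ∨ y ∈ P

/-- A `∨`-closed subset: nonempty and closed under join. -/
def IsJoinClosed (C : Set α) : Prop :=
  C.Nonempty ∧ ∀ x ∈ C, ∀ y ∈ C, x ⊔ y ∈ C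

/-- The filter generated by a set. -/
def filterGen (X : Set α) : Set α := ⋂₀ {G : Set α | IsFilter G ∧ X ⊆ G}

/-- An `X`-minimal prime filter: prime, contains `X`, minimal among primes containing `X`. -/
def IsMinPrimeOver (X P : Set α) : Prop :=
  IsPrimeFilter P ∧ X ⊆ P ∧ ∀ Q : Set α, IsPrimeFilter Q → X ⊆ Q → Q ⊆ P → Q = P

/-- `ω_F(X) = {a | x ∨ a ∈ F for some x ∈ X}`. -/
def omegaF (F X : Set α) : Set α := {a : α | ∃ x ∈ X, x ⊔ a ∈ F}

/-- The coannihilator `(F : x) = {a | x ∨ a ∈ F}`. -/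
def coann (F : Set α) (x : α) : Set α := {a : α | x ⊔ a ∈ F}

/-- `D_F(H) = {a | x ∨ a ∈ F for some x ∉ H}`, the set of `F`-divisors of `H`. -/
def divisorsF (F H : Set α) : Set α := {a : α | ∃ x ∉ H, x ⊔ a ∈ F}

/-- A lattice ideal: nonempty, closed under join and downward closed. -/
def IsLatticeIdeal (I : Set α) : Prop :=
  I.Nonempty ∧ (∀ x ∈ I, ∀ y ∈ I, x ⊔ y ∈ I) ∧ ∀ x y : α, x ≤ y → y ∈ I → x ∈ I

/-- The lattice ideal generated by a set. -/
def idealGen (X : Set α) : Set α := ⋂₀ {I : Set α | IsLatticeIdeal I ∧ X ⊆ I}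

/-- An `ω_F`-filter: a filter of the form `ω_F(I)` for some lattice ideal `I`. -/
def IsOmegaFilter (F H : Set α) : Prop :=
  IsFilter H ∧ ∃ I : Set α, IsLatticeIdeal I ∧ H = omegaF F I

open ResiduatedLattice in
lemma rmul_le_right (a b : α) : a * b ≤ b := by
  have h1 : (1:α) * b ≤ b := le_of_eq (one_mul b)
  have h2 : (1:α) ≤ rimp b b := (adjunction 1 b b).mp h1
  have h3 : a ≤ (1:α) := by rw [one_eq_top]; exact le_top
  exact (adjunction a b b).mpr (h3.trans h2)

lemma rmul_le_left (a b : α) : a * b ≤ a := by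
  rw [mul_comm]; exact rmul_le_right b a

open ResiduatedLattice in
lemma key_mul_sup (c d x y : α) :
    (c ⊔ x) * (d ⊔ y) ≤ c ⊔ d ⊔ x * y := by
  apply (adjunction _ _ _).mpr
  apply sup_le
  · exact (adjunction c (d ⊔ y) _).mp
      ((rmul_le_left c (d ⊔ y)).trans (le_sup_of_le_left le_sup_left))
  · apply (adjunction x (d ⊔ y) _).mp
    rw [mul_comm]
    apply (adjunction _ _ _).mpr
    apply sup_le
    · exact (adjunction d x _).mp
        ((rmul_le_left d x).trans (le_sup_of_le_left le_sup_right))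
    · exact (adjunction y x _).mp (by rw [mul_comm]; exact le_sup_right)

/-- Maximal join-closed set disjoint from `F`. -/
def MaxJC (F C : Set α) : Prop :=
  IsJoinClosed C ∧ C ∩ F = ∅ ∧
    ∀ C' : Set α, IsJoinClosed C' → C' ∩ F = ∅ → C ⊆ C' → C' = C

lemma maxjc_step {F C : Set α} (hF : IsFilter F) (h : MaxJC F C) {x : α} (hx : x ∉ C) :
    ∃ c ∈ C, c ⊔ x ∈ F := by
  obtain ⟨⟨hne, hjc⟩, hdisj, hmax⟩ := h
  set D : Set α := C ∪ {z | x ≤ z ∧ ∃ c ∈ C, z ≤ c ⊔ x} with hD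
  have hCD : C ⊆ D := Set.subset_union_left
  obtain ⟨a, ha⟩ := hne
  have hxD : x ∈ D := Or.inr ⟨le_rfl, a, ha, le_sup_right⟩
  have hjoin : ∀ p ∈ D, ∀ q ∈ D, p ⊔ q ∈ D := by
    rintro p (hp | ⟨hxp, c, hc, hpc⟩) q (hq | ⟨hxq, d, hd, hqd⟩)
    · exact Or.inl (hjc p hp q hq)
    · exact Or.inr ⟨le_sup_of_le_right hxq, p ⊔ d, hjc p hp d hd,
        sup_le (le_sup_of_le_left le_sup_left)
          (hqd.trans (sup_le_sup_right le_sup_right x))⟩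
    · exact Or.inr ⟨le_sup_of_le_left hxp, c ⊔ q, hjc c hc q hq,
        sup_le (hpc.trans (sup_le_sup_right le_sup_left x))
          (le_sup_of_le_left le_sup_right)⟩
    · exact Or.inr ⟨le_sup_of_le_left hxp, c ⊔ d, hjc c hc d hd,
        sup_le (hpc.trans (sup_le_sup_right le_sup_left x))
          (hqd.trans (sup_le_sup_right le_sup_right x))⟩
  by_cases hDF : D ∩ F = ∅
  · have hDC : D = C := hmax D ⟨⟨x, hxD⟩, hjoin⟩ hDF hCD
    exact absurd (hDC ▸ hxD) hx
  · obtain ⟨z, hzD, hzF⟩ := Set.nonempty_iff_ne_empty.mpr hDF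
    rcases hzD with hzC | ⟨hxz, c, hc, hzc⟩
    · exact (Set.eq_empty_iff_forall_notMem.mp hdisj z ⟨hzC, hzF⟩).elim
    · exact ⟨c, hc, hF.2.2 z hzF _ hzc⟩

lemma compl_prime {F C : Set α} (hF : IsFilter F) (h : MaxJC F C) :
    IsPrimeFilter Cᶜ ∧ F ⊆ Cᶜ := by
  obtain ⟨⟨hne, hjc⟩, hdisj, hmax⟩ := h
  have hFsub : F ⊆ Cᶜ := fun z hz hzC =>
    Set.eq_empty_iff_forall_notMem.mp hdisj z ⟨hzC, hz⟩
  obtain ⟨f, hf⟩ := hF.1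
  refine ⟨⟨⟨⟨f, hFsub hf⟩, ?_, ?_⟩, ?_, ?_⟩, hFsub⟩
  · -- closed under multiplication
    intro x hx y hy hxy
    obtain ⟨c, hc, hcF⟩ := maxjc_step hF ⟨⟨hne, hjc⟩, hdisj, hmax⟩ hx
    obtain ⟨d, hd, hdF⟩ := maxjc_step hF ⟨⟨hne, hjc⟩, hdisj, hmax⟩ hy
    have ht : c ⊔ d ⊔ x * y ∈ C := hjc _ (hjc c hc d hd) _ hxy
    have htF : c ⊔ d ⊔ x * y ∈ F :=
      hF.2.2 _ (hF.2.1 _ hcF _ hdF) _ (key_mul_sup c d x y)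
    exact Set.eq_empty_iff_forall_notMem.mp hdisj _ ⟨ht, htF⟩
  · -- upward closed
    intro x hx y hxy hyC
    obtain ⟨c, hc, hcF⟩ := maxjc_step hF ⟨⟨hne, hjc⟩, hdisj, hmax⟩ hx
    have hcy : c ⊔ y ∈ C := hjc c hc y hyC
    have : c ⊔ y ∈ F := hF.2.2 _ hcF _ (sup_le_sup_left hxy c)
    exact Set.eq_empty_iff_forall_notMem.mp hdisj _ ⟨hcy, this⟩
  · -- proper
    intro hu
    obtain ⟨a, ha⟩ := hne
    have : a ∈ Cᶜ := hu.symm ▸ Set.mem_univ a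
    exact this ha
  · -- prime
    intro x y hxy
    by_contra hcon
    push_neg at hcon
    obtain ⟨hx, hy⟩ := hcon
    simp only [Set.mem_compl_iff, not_not] at hx hy
    exact hxy (hjc x hx y hy)

lemma exists_maxjc {F C : Set α} (hC : IsJoinClosed C) (hd : C ∩ F = ∅) :
    ∃ D : Set α, C ⊆ D ∧ MaxJC F D := by
  have hzorn : ∀ c ⊆ {E : Set α | IsJoinClosed E ∧ E ∩ F = ∅}, IsChain (· ⊆ ·) c →
      c.Nonempty → ∃ ub ∈ {E : Set α | IsJoinClosed E ∧ E ∩ F = ∅}, ∀ s ∈ c, s ⊆ ub := by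
    intro c hcS hchain hcne
    refine ⟨⋃₀ c, ⟨⟨?_, ?_⟩, ?_⟩, fun s hs => Set.subset_sUnion_of_mem hs⟩
    · obtain ⟨s, hs⟩ := hcne
      obtain ⟨a, ha⟩ := (hcS hs).1.1
      exact ⟨a, s, hs, ha⟩
    · rintro x ⟨s, hs, hxs⟩ y ⟨t, ht, hyt⟩
      rcases hchain.total hs ht with hst | hts
      · exact ⟨t, ht, (hcS ht).1.2 x (hst hxs) y hyt⟩
      · exact ⟨s, hs, (hcS hs).1.2 x hxs y (hts hyt)⟩
    · apply Set.eq_empty_iff_forall_notMem.mpr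
      rintro z ⟨⟨s, hs, hzs⟩, hzF⟩
      exact Set.eq_empty_iff_forall_notMem.mp (hcS hs).2 z ⟨hzs, hzF⟩
  obtain ⟨D, hCD, hDmem, hDmax⟩ :=
    zorn_subset_nonempty {E : Set α | IsJoinClosed E ∧ E ∩ F = ∅} hzorn C ⟨hC, hd⟩
  exact ⟨D, hCD, hDmem.1, hDmem.2, fun C' hC' hC'd hDC' =>
    le_antisymm (hDmax ⟨hC', hC'd⟩ hDC') hDC'⟩

/-- Theorem 2.6: `P` is an `F`-minimal prime filter iff `Pᶜ` is a `∨`-closed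
set maximal among `∨`-closed sets disjoint from `F`. -/
theorem stmt_2 (F P : Set α) (hF : IsFilter F) :
    IsMinPrimeOver F P ↔
      (IsJoinClosed Pᶜ ∧ Pᶜ ∩ F = ∅ ∧
        ∀ C : Set α, IsJoinClosed C → C ∩ F = ∅ → Pᶜ ⊆ C → C = Pᶜ) := by
  
  constructor
  · rintro ⟨hP, hFP, hmin⟩
    have hcne : Pᶜ.Nonempty := Set.nonempty_compl.mpr hP.2.1
    have hjc : IsJoinClosed Pᶜ := by
      refine ⟨hcne, fun x hx y hy hxy => ?_⟩
      rcases hP.2.2 x y hxy with h | h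
      · exact hx h
      · exact hy h
    have hdisj : Pᶜ ∩ F = ∅ :=
      Set.eq_empty_iff_forall_notMem.mpr fun z ⟨hz1, hz2⟩ => hz1 (hFP hz2)
    refine ⟨hjc, hdisj, fun C hCjc hCd hsub => ?_⟩
    obtain ⟨D, hCD, hDmax⟩ := exists_maxjc hCjc hCd
    obtain ⟨hDprime, hFD⟩ := compl_prime hF hDmax
    have hDP : Dᶜ ⊆ P := by
      have := Set.compl_subset_compl.mpr (hsub.trans hCD)
      rwa [compl_compl] at this
    have hDeq : Dᶜ = P := hmin Dᶜ hDprime hFD hDP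
    have hDPc : D = Pᶜ := by rw [← hDeq, compl_compl]
    exact Set.Subset.antisymm (hDPc ▸ hCD) hsub
  · rintro ⟨hjc, hdisj, hmax⟩
    have hmx : MaxJC F Pᶜ := ⟨hjc, hdisj, hmax⟩
    obtain ⟨hprime, hFsub⟩ := compl_prime hF hmx
    rw [compl_compl] at hprime hFsub
    refine ⟨hprime, hFsub, fun Q hQ hFQ hQP => ?_⟩
    have hQjc : IsJoinClosed Qᶜ := by
      refine ⟨Set.nonempty_compl.mpr hQ.2.1, fun x hx y hy hxy => ?_⟩
      rcases hQ.2.2 x y hxy with h | h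
      · exact hx h
      · exact hy h
    have hQd : Qᶜ ∩ F = ∅ :=
      Set.eq_empty_iff_forall_notMem.mpr fun z ⟨hz1, hz2⟩ => hz1 (hFQ hz2)
    have hPQ : Pᶜ ⊆ Qᶜ := Set.compl_subset_compl.mpr hQP
    have := hmax Qᶜ hQjc hQd hPQ
    have := congrArg compl this
    rwa [compl_compl, compl_compl] at this
end

section
/- Let A be a residuated lattice, F a filter of A, and let I, J be lattice ideals of A. Then ω_F(I) ∩ ω_F(J) = ω_F(I ∩ J), and ω_F(K), where K is the lattice ideal generated by I ∪ J, is the smallest ω_F-filter containing both ω_F(I) and ω_F(J). Consequently the set Ω_F(A) of all ω_F-filters, ordered by inclusion, is a bounded distributive lattice with least element F and greatest element A. -/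
variable {α : Type*} [ResiduatedLattice α]

section Aux

lemma rl_adj {x y z : α} : x * y ≤ z ↔ x ≤ ResiduatedLattice.rimp y z :=
  ResiduatedLattice.adjunction x y z

lemma rl_mul_le_left (x y : α) : x * y ≤ x := by
  rw [mul_comm, rl_adj]
  have h1 : (1 : α) ≤ ResiduatedLattice.rimp x x := by
    rw [← rl_adj, one_mul]
  calc y ≤ ⊤ := le_top
    _ = (1 : α) := ResiduatedLattice.one_eq_top.symm
    _ ≤ _ := h1

lemma rl_mul_le_right (x y : α) : x * y ≤ y := by
  rw [mul_comm]; exact rl_mul_le_left y x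

lemma rl_mul_le_inf (x y : α) : x * y ≤ x ⊓ y :=
  le_inf (rl_mul_le_left x y) (rl_mul_le_right x y)

lemma rl_sup_mul_le {x y z w : α} (h1 : x * z ≤ w) (h2 : y * z ≤ w) : (x ⊔ y) * z ≤ w := by
  rw [rl_adj] at h1 h2 ⊢
  exact sup_le h1 h2

lemma rl_mul_sup_le {x y z w : α} (h1 : z * x ≤ w) (h2 : z * y ≤ w) : z * (x ⊔ y) ≤ w := by
  rw [mul_comm] at h1 h2 ⊢
  exact rl_sup_mul_le h1 h2

lemma rl_top_mem {F : Set α} (hF : IsFilter F) : (⊤ : α) ∈ F := by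
  obtain ⟨x, hx⟩ := hF.1
  exact hF.2.2 x hx ⊤ le_top

lemma omega_isFilter {F I : Set α} (hF : IsFilter F) (hI : IsLatticeIdeal I) :
    IsFilter (omegaF F I) := by
  obtain ⟨x0, hx0⟩ := hI.1
  refine ⟨⟨⊤, x0, hx0, by simpa using rl_top_mem hF⟩, ?_, ?_⟩
  · rintro a ⟨x, hx, hxa⟩ b ⟨y, hy, hyb⟩
    refine ⟨x ⊔ y, hI.2.1 x hx y hy, ?_⟩
    refine hF.2.2 _ (hF.2.1 _ hxa _ hyb) _ ?_
    apply rl_sup_mul_le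
    · exact le_trans (rl_mul_le_left x _) (le_sup_left.trans le_sup_left)
    · apply rl_mul_sup_le
      · exact le_trans (rl_mul_le_right a y) (le_sup_right.trans le_sup_left)
      · exact le_sup_right
  · rintro a ⟨x, hx, hxa⟩ b hab
    exact ⟨x, hx, hF.2.2 _ hxa _ (sup_le_sup_left hab x)⟩

lemma omega_mono {F X Y : Set α} (h : X ⊆ Y) : omegaF F X ⊆ omegaF F Y := by
  rintro a ⟨x, hx, hxa⟩
  exact ⟨x, h hx, hxa⟩

lemma subset_omega {F I : Set α} (hF : IsFilter F) (hI : I.Nonempty) : F ⊆ omegaF F I := by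
  obtain ⟨x, hx⟩ := hI
  exact fun a ha => ⟨x, hx, hF.2.2 a ha _ le_sup_right⟩

lemma subset_idealGen {X : Set α} : X ⊆ idealGen X := by
  intro a ha
  simp only [idealGen, Set.mem_sInter, Set.mem_setOf_eq]
  rintro I ⟨_, hXI⟩
  exact hXI ha

lemma idealGen_subset {X I : Set α} (hI : IsLatticeIdeal I) (h : X ⊆ I) :
    idealGen X ⊆ I := Set.sInter_subset_of_mem ⟨hI, h⟩

lemma idealGen_isIdeal {X : Set α} (hX : X.Nonempty) : IsLatticeIdeal (idealGen X) := by
  obtain ⟨x0, hx0⟩ := hX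
  refine ⟨⟨x0, subset_idealGen hx0⟩, ?_, ?_⟩
  · intro x hx y hy
    simp only [idealGen, Set.mem_sInter, Set.mem_setOf_eq] at hx hy ⊢
    rintro I hI
    exact hI.1.2.1 x (hx I hI) y (hy I hI)
  · intro x y hxy hy
    simp only [idealGen, Set.mem_sInter, Set.mem_setOf_eq] at hy ⊢
    rintro I hI
    exact hI.1.2.2 x y hxy (hy I hI)

lemma inter_isIdeal {I J : Set α} (hI : IsLatticeIdeal I) (hJ : IsLatticeIdeal J) :
    IsLatticeIdeal (I ∩ J) := by
  obtain ⟨x, hx⟩ := hI.1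
  obtain ⟨y, hy⟩ := hJ.1
  refine ⟨⟨x ⊓ y, hI.2.2 _ x inf_le_left hx, hJ.2.2 _ y inf_le_right hy⟩, ?_, ?_⟩
  · rintro a ⟨ha1, ha2⟩ b ⟨hb1, hb2⟩
    exact ⟨hI.2.1 a ha1 b hb1, hJ.2.1 a ha2 b hb2⟩
  · rintro a b hab ⟨hb1, hb2⟩
    exact ⟨hI.2.2 a b hab hb1, hJ.2.2 a b hab hb2⟩

lemma omega_inter {F I J : Set α} (hF : IsFilter F) (hI : IsLatticeIdeal I)
    (hJ : IsLatticeIdeal J) :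
    omegaF F I ∩ omegaF F J = omegaF F (I ∩ J) := by
  ext a
  constructor
  · rintro ⟨⟨x, hx, hxa⟩, ⟨y, hy, hya⟩⟩
    refine ⟨x * y, ⟨hI.2.2 _ x (rl_mul_le_left x y) hx, hJ.2.2 _ y (rl_mul_le_right x y) hy⟩, ?_⟩
    refine hF.2.2 _ (hF.2.1 _ hxa _ hya) _ ?_
    apply rl_sup_mul_le
    · apply rl_mul_sup_le
      · exact le_sup_left
      · exact le_trans (rl_mul_le_right x a) le_sup_right
    · exact le_trans (rl_mul_le_left a (y ⊔ a)) le_sup_right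
  · rintro ⟨z, ⟨hz1, hz2⟩, hza⟩
    exact ⟨⟨z, hz1, hza⟩, ⟨z, hz2, hza⟩⟩

lemma idealGen_union_bound {J K : Set α} (hJ : IsLatticeIdeal J) (hK : IsLatticeIdeal K) :
    idealGen (J ∪ K) ⊆ {w : α | ∃ y ∈ J, ∃ k ∈ K, w ≤ y ⊔ k} := by
  apply idealGen_subset
  · obtain ⟨y0, hy0⟩ := hJ.1
    obtain ⟨k0, hk0⟩ := hK.1
    refine ⟨⟨y0, y0, hy0, k0, hk0, le_sup_left⟩, ?_, ?_⟩
    · rintro a ⟨y, hy, k, hk, ha⟩ b ⟨y', hy', k', hk', hb⟩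
      exact ⟨y ⊔ y', hJ.2.1 _ hy _ hy', k ⊔ k', hK.2.1 _ hk _ hk',
        sup_le (ha.trans (sup_le_sup le_sup_left le_sup_left))
               (hb.trans (sup_le_sup le_sup_right le_sup_right))⟩
    · rintro a b hab ⟨y, hy, k, hk, hb⟩
      exact ⟨y, hy, k, hk, hab.trans hb⟩
  · rintro w (hw | hw)
    · obtain ⟨k0, hk0⟩ := hK.1
      exact ⟨w, hw, k0, hk0, le_sup_left⟩
    · obtain ⟨y0, hy0⟩ := hJ.1
      exact ⟨y0, hy0, w, hw, le_sup_right⟩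

end Aux

/-- Proposition 3.6: `ω_F(I) ∩ ω_F(J) = ω_F(I ∩ J)`; `ω_F` of the ideal
generated by `I ∪ J` is the least `ω_F`-filter containing `ω_F(I)` and `ω_F(J)`; and the
`ω_F`-filters form a bounded distributive lattice with least element `F` and greatest
element `A`. -/
theorem stmt_6 (F I J : Set α) (hF : IsFilter F)
    (hI : IsLatticeIdeal I) (hJ : IsLatticeIdeal J) :
    omegaF F I ∩ omegaF F J = omegaF F (I ∩ J) ∧
    IsLeast {H : Set α | IsOmegaFilter F H ∧ omegaF F I ⊆ H ∧ omegaF F J ⊆ H}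
      (omegaF F (idealGen (I ∪ J))) ∧
    (IsOmegaFilter F F ∧ IsOmegaFilter F (Set.univ : Set α) ∧
      ∀ H : Set α, IsOmegaFilter F H → F ⊆ H) ∧
    (∀ K : Set α, IsLatticeIdeal K →
      omegaF F I ∩ omegaF F (idealGen (J ∪ K)) =
        omegaF F (idealGen ((I ∩ J) ∪ (I ∩ K)))) := by
  obtain ⟨x0, hx0⟩ := hI.1
  have hGen : IsLatticeIdeal (idealGen (I ∪ J)) := idealGen_isIdeal ⟨x0, Or.inl hx0⟩
  refine ⟨omega_inter hF hI hJ, ?_, ?_, ?_⟩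
  · constructor
    · exact ⟨⟨omega_isFilter hF hGen, _, hGen, rfl⟩,
        omega_mono (Set.subset_union_left.trans subset_idealGen),
        omega_mono (Set.subset_union_right.trans subset_idealGen)⟩
    · rintro H ⟨⟨hHfil, K', hK', rfl⟩, hIH, hJH⟩
      rintro a ⟨z, hz, hza⟩
      obtain ⟨y, hy, k, hk, hzle⟩ := idealGen_union_bound hI hJ hz
      have h1 : (y ⊔ k) ⊔ a ∈ F := hF.2.2 _ hza _ (sup_le_sup_right hzle a)
      have h2 : k ⊔ a ∈ omegaF F I := ⟨y, hy, by rwa [← sup_assoc]⟩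
      obtain ⟨m, hm, hmka⟩ := hIH h2
      have h4 : m ⊔ a ∈ omegaF F J := ⟨k, hk, by rwa [sup_left_comm] at hmka⟩
      obtain ⟨m', hm', hm'ma⟩ := hJH h4
      exact ⟨m' ⊔ m, hK'.2.1 _ hm' _ hm, by rwa [sup_assoc]⟩
  · refine ⟨⟨hF, {⊥}, ?_, ?_⟩, ⟨?_, Set.univ, ?_, ?_⟩, ?_⟩
    · refine ⟨⟨⊥, rfl⟩, ?_, ?_⟩
      · rintro x rfl y rfl; simp
      · rintro x y hxy rfl
        simpa using le_bot_iff.mp hxy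
    · ext a
      simp [omegaF]
    · exact ⟨⟨⊤, trivial⟩, fun _ _ _ _ => trivial, fun _ _ _ _ => trivial⟩
    · exact ⟨⟨⊤, trivial⟩, fun _ _ _ _ => trivial, fun _ _ _ _ => trivial⟩
    · refine (Set.eq_univ_of_univ_subset ?_).symm
      intro a _
      exact ⟨⊤, trivial, by simpa using rl_top_mem hF⟩
    · rintro H ⟨hfil, K, hK, rfl⟩
      exact subset_omega hF hK.1
  · intro K hK
    have hJK : IsLatticeIdeal (idealGen (J ∪ K)) := by
      obtain ⟨y0, hy0⟩ := hJ.1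
      exact idealGen_isIdeal ⟨y0, Or.inl hy0⟩
    have hIJ : IsLatticeIdeal (I ∩ J) := inter_isIdeal hI hJ
    have hIK : IsLatticeIdeal (I ∩ K) := inter_isIdeal hI hK
    obtain ⟨w0, hw0⟩ := hIJ.1
    have hGen2 : IsLatticeIdeal (idealGen ((I ∩ J) ∪ (I ∩ K))) :=
      idealGen_isIdeal ⟨w0, Or.inl hw0⟩
    rw [omega_inter hF hI hJK]
    apply Set.Subset.antisymm
    · rintro a ⟨z, ⟨hzI, hzG⟩, hza⟩
      obtain ⟨y, hy, k, hk, hzle⟩ := idealGen_union_bound hJ hK hzG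
      have h1 : (y ⊔ k) ⊔ a ∈ F := hF.2.2 _ hza _ (sup_le_sup_right hzle a)
      have hw1 : z ⊓ y ∈ idealGen ((I ∩ J) ∪ (I ∩ K)) :=
        subset_idealGen (Or.inl ⟨hI.2.2 _ z inf_le_left hzI, hJ.2.2 _ y inf_le_right hy⟩)
      have hw2 : z ⊓ k ∈ idealGen ((I ∩ J) ∪ (I ∩ K)) :=
        subset_idealGen (Or.inr ⟨hI.2.2 _ z inf_le_left hzI, hK.2.2 _ k inf_le_right hk⟩)
      refine ⟨(z ⊓ y) ⊔ (z ⊓ k), hGen2.2.1 _ hw1 _ hw2, ?_⟩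
      refine hF.2.2 _ (hF.2.1 _ hza _ h1) _ ?_
      apply rl_sup_mul_le
      · apply rl_mul_sup_le
        · apply rl_mul_sup_le
          · exact le_trans (rl_mul_le_inf z y) (le_sup_left.trans le_sup_left)
          · exact le_trans (rl_mul_le_inf z k) (le_sup_right.trans le_sup_left)
        · exact le_trans (rl_mul_le_right z a) le_sup_right
      · exact le_trans (rl_mul_le_left a _) le_sup_right
    · apply omega_mono
      apply idealGen_subset (inter_isIdeal hI hJK)
      rintro w (⟨h1, h2⟩ | ⟨h1, h2⟩)
      · exact ⟨h1, subset_idealGen (Or.inl h2)⟩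
      · exact ⟨h1, subset_idealGen (Or.inr h2)⟩
end
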